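/- arXiv:2504.04267 — 2 statements merged into one kernel-verified Lean document; each statement's English description precedes it below -/
import Mathlib

section
/- Let P = (p₁,…,p_n) be a probability distribution. Then the Knuth–Yao expected entropy cost Σᵢ ν(pᵢ) satisfies H(P) ≤ Σᵢ ν(pᵢ) < H(P) + 2, where H(P) = Σᵢ pᵢ log₂(1/pᵢ) and ν(x) = Σ_{d≥1} d·ε_d(x)·2^{-d}. -/
noncomputable def epsBit (d : ℕ) (x : ℝ) : ℝ := ((⌊2 ^ d * x⌋ % 2 : ℤ) : ℝ)

noncomputable def nu (x : ℝ) : ℝ := ∑' d : ℕ, (d : ℝ) * epsBit d x / 2 ^ d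

lemma epsBit_mem (d : ℕ) (x : ℝ) : epsBit d x = 0 ∨ epsBit d x = 1 := by
  unfold epsBit
  rcases Int.emod_two_eq ⌊2 ^ d * x⌋ with h | h <;> rw [h] <;> simp

lemma epsBit_nonneg (d : ℕ) (x : ℝ) : 0 ≤ epsBit d x := by
  rcases epsBit_mem d x with h | h <;> rw [h] <;> norm_num

lemma epsBit_le_one (d : ℕ) (x : ℝ) : epsBit d x ≤ 1 := by
  rcases epsBit_mem d x with h | h <;> rw [h] <;> norm_num

lemma floor_two_mul' (y : ℝ) : ⌊2 * y⌋ = 2 * ⌊y⌋ + ⌊2 * y⌋ % 2 := by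
  have h1 : 2 * ⌊y⌋ ≤ ⌊2 * y⌋ := by
    apply Int.le_floor.mpr; push_cast; linarith [Int.floor_le y]
  have h2 : ⌊2 * y⌋ < 2 * ⌊y⌋ + 2 := by
    apply Int.floor_lt.mpr; push_cast; linarith [Int.lt_floor_add_one y]
  omega

lemma floor_rec (x : ℝ) (N : ℕ) :
    ((⌊2 ^ (N + 1) * x⌋ : ℝ)) = 2 * (⌊2 ^ N * x⌋ : ℝ) + epsBit (N + 1) x := by
  have h : (2 : ℝ) ^ (N + 1) * x = 2 * (2 ^ N * x) := by ring
  have hint : ⌊(2:ℝ) ^ (N + 1) * x⌋ = 2 * ⌊(2:ℝ) ^ N * x⌋ + ⌊(2:ℝ) ^ (N + 1) * x⌋ % 2 := by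
    rw [h]; exact floor_two_mul' _
  have := congrArg (fun z : ℤ => (z : ℝ)) hint
  unfold epsBit
  push_cast at this ⊢
  linarith

lemma partial_sum_eq (x : ℝ) (h0 : 0 ≤ x) (h1 : x < 1) (N : ℕ) :
    ∑ d ∈ Finset.range (N + 1), epsBit d x / 2 ^ d = (⌊2 ^ N * x⌋ : ℝ) / 2 ^ N := by
  induction N with
  | zero =>
    have hfl : ⌊x⌋ = 0 := Int.floor_eq_zero_iff.mpr ⟨h0, h1⟩
    simp [epsBit, hfl]
  | succ N ih =>
    rw [Finset.sum_range_succ, ih, floor_rec x N]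
    have h2 : (2 : ℝ) ^ (N + 1) = 2 * 2 ^ N := by ring
    field_simp
    ring

lemma summable_bits (x : ℝ) : Summable (fun d : ℕ => epsBit d x / 2 ^ d) := by
  apply Summable.of_nonneg_of_le
    (fun d => div_nonneg (epsBit_nonneg d x) (by positivity))
    (fun d => ?_) summable_geometric_two
  calc epsBit d x / 2 ^ d ≤ 1 / 2 ^ d := by gcongr; exact epsBit_le_one d x
  _ = (1 / 2 : ℝ) ^ d := by rw [one_div_pow]

lemma hasSum_bits (x : ℝ) (h0 : 0 ≤ x) (h1 : x < 1) :
    HasSum (fun d : ℕ => epsBit d x / 2 ^ d) x := by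
  obtain ⟨L, hL⟩ := summable_bits x
  have htend := hL.tendsto_sum_nat
  have key : Filter.Tendsto (fun N => ∑ d ∈ Finset.range (N + 1), epsBit d x / 2 ^ d)
      Filter.atTop (nhds x) := by
    have heq : (fun N => ∑ d ∈ Finset.range (N + 1), epsBit d x / 2 ^ d)
        = fun N : ℕ => (⌊2 ^ N * x⌋ : ℝ) / 2 ^ N := by
      funext N; exact partial_sum_eq x h0 h1 N
    rw [heq]
    apply tendsto_of_tendsto_of_tendsto_of_le_of_le
      (g := fun N : ℕ => x - (1 / 2 : ℝ) ^ N) (h := fun _ => x)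
    · have h3 : Filter.Tendsto (fun N : ℕ => (1 / 2 : ℝ) ^ N) Filter.atTop (nhds 0) := by
        apply tendsto_pow_atTop_nhds_zero_of_lt_one <;> norm_num
      simpa using (tendsto_const_nhds (x := x)).sub h3
    · exact tendsto_const_nhds
    · intro N
      have h2 : (0 : ℝ) < 2 ^ N := by positivity
      have hx2 : x ≤ ((⌊2 ^ N * x⌋ : ℝ) + 1) / 2 ^ N := by
        rw [le_div_iff₀ h2]
        linarith [Int.lt_floor_add_one ((2:ℝ) ^ N * x)]
      have : ((⌊2 ^ N * x⌋ : ℝ) + 1) / 2 ^ N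
          = (⌊2 ^ N * x⌋ : ℝ) / 2 ^ N + (1 / 2 : ℝ) ^ N := by
        rw [add_div, one_div_pow, one_div]
      linarith [hx2, this ▸ hx2]
    · intro N
      have h2 : (0 : ℝ) < 2 ^ N := by positivity
      rw [div_le_iff₀ h2]
      linarith [Int.floor_le ((2:ℝ) ^ N * x)]
  have h' : Filter.Tendsto (fun N : ℕ => ∑ d ∈ Finset.range (N + 1), epsBit d x / 2 ^ d)
      Filter.atTop (nhds L) := (Filter.tendsto_add_atTop_iff_nat 1).mpr htend
  have hLx : L = x := tendsto_nhds_unique h' key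
  rwa [hLx] at hL

lemma summable_nu (x : ℝ) : Summable (fun d : ℕ => (d : ℝ) * epsBit d x / 2 ^ d) := by
  have hs : Summable (fun d : ℕ => (d : ℝ) * (1 / 2 : ℝ) ^ d) := by
    have := summable_pow_mul_geometric_of_norm_lt_one (R := ℝ) 1 (r := 1 / 2) (by norm_num)
    simpa using this
  apply Summable.of_nonneg_of_le
    (fun d => div_nonneg (mul_nonneg (Nat.cast_nonneg d) (epsBit_nonneg d x)) (by positivity))
    (fun d => ?_) hs
  calc (d : ℝ) * epsBit d x / 2 ^ d ≤ (d : ℝ) * 1 / 2 ^ d := by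
        gcongr; exact epsBit_le_one d x
  _ = (d : ℝ) * (1 / 2 : ℝ) ^ d := by rw [mul_one, one_div_pow]; ring

lemma tsum_nat_half : ∑' d : ℕ, (d : ℝ) * (1 / 2 : ℝ) ^ d = 2 := by
  rw [tsum_coe_mul_geometric_of_norm_lt_one (r := (1/2 : ℝ)) (by norm_num)]
  norm_num

lemma bit_le (x : ℝ) (h0 : 0 ≤ x) (h1 : x < 1) (d : ℕ) (hd : epsBit d x = 1) :
    (1 / 2 : ℝ) ^ d ≤ x := by
  have := le_hasSum (hasSum_bits x h0 h1) d
    (fun j _ => div_nonneg (epsBit_nonneg j x) (by positivity))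
  rw [hd] at this
  calc (1/2 : ℝ) ^ d = 1 / 2 ^ d := one_div_pow 2 d
  _ ≤ x := this

lemma logb_two_pow (d : ℕ) : Real.logb 2 (2 ^ d) = d := by
  simp [Real.logb, Real.log_pow, mul_div_assoc,
    div_self (Real.log_ne_zero_of_pos_of_ne_one (by norm_num : (0:ℝ) < 2) (by norm_num))]

lemma nu_nonneg (x : ℝ) : 0 ≤ nu x :=
  tsum_nonneg fun d => div_nonneg (mul_nonneg (Nat.cast_nonneg d) (epsBit_nonneg d x)) (by positivity)

lemma lower_bound (x : ℝ) (h0 : 0 ≤ x) (h1 : x ≤ 1) :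
    x * Real.logb 2 (1 / x) ≤ nu x := by
  rcases eq_or_lt_of_le h1 with h | h
  · rw [h]; simp [nu_nonneg]
  rcases eq_or_lt_of_le h0 with h0' | h0'
  · rw [← h0']; simpa using nu_nonneg 0
  -- now 0 < x < 1
  have hs := hasSum_bits x h0 h
  have hmul : HasSum (fun d : ℕ => epsBit d x / 2 ^ d * Real.logb 2 (1 / x))
      (x * Real.logb 2 (1 / x)) := hs.mul_right _
  rw [← hmul.tsum_eq]
  apply Summable.tsum_le_tsum _ hmul.summable (summable_nu x)
  intro d
  rcases epsBit_mem d x with hb | hb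
  · rw [hb]; simp
  · rw [hb]
    have hle : 1 / x ≤ 2 ^ d := by
      rw [div_le_iff₀ h0']
      have := bit_le x h0 h d hb
      rw [one_div_pow] at this
      rw [div_le_iff₀ (by positivity : (0:ℝ) < 2 ^ d)] at this
      linarith
    have hlogle : Real.logb 2 (1 / x) ≤ d := by
      calc Real.logb 2 (1 / x) ≤ Real.logb 2 (2 ^ d) :=
            Real.logb_le_logb_of_le (by norm_num) (by positivity) hle
      _ = d := logb_two_pow d
    have h2 : (0:ℝ) < 2 ^ d := by positivity
    rw [div_mul_eq_mul_div, one_mul, mul_one]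
    gcongr

lemma nu_one : nu 1 = 0 := by
  unfold nu
  convert tsum_zero with d
  cases d with
  | zero => simp
  | succ m =>
    have h1 : (2:ℝ) ^ (m+1) * 1 = ((2^(m+1) : ℤ) : ℝ) := by push_cast; ring
    have h2 : epsBit (m+1) 1 = 0 := by
      unfold epsBit
      rw [h1, Int.floor_intCast]
      have : (2:ℤ)^(m+1) % 2 = 0 :=
        Int.emod_eq_zero_of_dvd (dvd_pow_self 2 (Nat.succ_ne_zero m))
      rw [this]; simp
    rw [h2]; ring

lemma upper_bound_strict (x : ℝ) (h0 : 0 < x) (h1 : x ≤ 1) :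
    nu x < x * Real.logb 2 (1 / x) + 2 * x := by
  rcases eq_or_lt_of_le h1 with h | h
  · rw [h, nu_one]; norm_num
  -- 0 < x < 1
  have hex : ∃ d, epsBit d x ≠ 0 := by
    by_contra hc
    push_neg at hc
    have hz : HasSum (fun d : ℕ => epsBit d x / 2 ^ d) 0 := by
      have : (fun d : ℕ => epsBit d x / 2 ^ d) = fun _ => 0 := by
        funext d; rw [hc d]; simp
      rw [this]; exact hasSum_zero
    have := hz.unique (hasSum_bits x h0.le h)
    linarith
  classical
  set k := Nat.find hex with hkdef
  have hk : epsBit k x = 1 := by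
    rcases epsBit_mem k x with hh | hh
    · exact absurd hh (Nat.find_spec hex)
    · exact hh
  have hmin : ∀ d < k, epsBit d x = 0 := by
    intro d hd
    by_contra hc
    exact absurd (Nat.find_le hc) (not_le.mpr hd)
  have hk0 : k ≠ 0 := by
    intro hc
    have : epsBit 0 x = 0 := by
      unfold epsBit
      have : ⌊(2:ℝ)^0 * x⌋ = 0 := by
        rw [pow_zero, one_mul]; exact Int.floor_eq_zero_iff.mpr ⟨h0.le, h⟩
      rw [this]; simp
    rw [hc] at hk; rw [this] at hk; norm_num at hk
  obtain ⟨m, hm⟩ : ∃ m, k = m + 1 := ⟨k - 1, by omega⟩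
  have hxge : (1/2:ℝ)^k ≤ x := bit_le x h0.le h k hk
  have hxlt : x < 2 * (1/2:ℝ)^k := by
    have hsum0 : ∑ d ∈ Finset.range (m+1), epsBit d x / 2 ^ d = 0 := by
      apply Finset.sum_eq_zero
      intro d hd
      rw [hmin d (by simp at hd; omega)]; simp
    have := partial_sum_eq x h0.le h m
    rw [hsum0] at this
    have hfl : (⌊(2:ℝ)^m * x⌋ : ℝ) = 0 := by
      have h2 : (0:ℝ) < 2^m := by positivity
      field_simp at this
      linarith [this]
    have hfl' : ⌊(2:ℝ)^m * x⌋ = 0 := by exact_mod_cast hfl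
    have := (Int.floor_eq_zero_iff.mp hfl').2
    have hx2 : (2:ℝ)^m * x < 1 := by exact_mod_cast this
    have h2 : (0:ℝ) < 2^m := by positivity
    have : x < 1 / 2^m := by rw [lt_div_iff₀ h2]; linarith
    calc x < 1 / 2^m := this
    _ = 2 * (1/2:ℝ)^(m+1) := by rw [one_div_pow]; field_simp; ring
    _ = 2 * (1/2:ℝ)^k := by rw [hm]
  -- main inequality nu x ≤ (k+1) x
  have hsnu := summable_nu x
  have hbits := hasSum_bits x h0.le h
  have hnukx : nu x ≤ ((k:ℝ) + 1) * x := by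
    set g : ℕ → ℝ := fun d => if k < d then ((d:ℝ) - k - 1) * (1/2:ℝ)^d else 0 with hgdef
    have hgnonneg : ∀ d, 0 ≤ g d := by
      intro d
      rw [hgdef]
      by_cases hd : k < d
      · simp only [if_pos hd]
        have : (0:ℝ) ≤ (d:ℝ) - k - 1 := by
          have : (k:ℝ) + 1 ≤ d := by exact_mod_cast hd
          linarith
        positivity
      · simp [hd]
    have hg : Summable g := by
      have hs : Summable (fun d : ℕ => (d : ℝ) * (1 / 2 : ℝ) ^ d) := by
        have := summable_pow_mul_geometric_of_norm_lt_one (R := ℝ) 1 (r := 1 / 2) (by norm_num)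
        simpa using this
      apply Summable.of_nonneg_of_le hgnonneg (fun d => ?_) hs
      rw [hgdef]
      by_cases hd : k < d
      · simp only [if_pos hd]
        apply mul_le_mul_of_nonneg_right _ (by positivity)
        have := Nat.cast_nonneg (α := ℝ) k
        linarith
      · simp only [if_neg hd]; positivity
    have hgsum : ∑' d, g d = (1/2:ℝ)^k := by
      have hsplit := Summable.sum_add_tsum_nat_add (f := g) (k+1) hg
      have hzero : ∑ d ∈ Finset.range (k+1), g d = 0 := by
        apply Finset.sum_eq_zero
        intro d hd
        simp only [Finset.mem_range] at hd
        rw [hgdef]; simp only [if_neg (by omega : ¬ k < d)]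
      have htail : (fun j : ℕ => g (j + (k+1))) = fun j : ℕ => ((j:ℝ) * (1/2:ℝ)^j) * (1/2:ℝ)^(k+1) := by
        funext j
        rw [hgdef]
        simp only [if_pos (by omega : k < j + (k+1))]
        push_cast
        rw [pow_add]
        ring
      rw [hzero, zero_add] at hsplit
      rw [← hsplit, htail, tsum_mul_right, tsum_nat_half]
      rw [pow_succ]
      ring
    have hi : HasSum (fun d : ℕ => if d = k then (1/2:ℝ)^k else 0) ((1/2:ℝ)^k) :=
      hasSum_ite_eq k _
    have hterm : ∀ d : ℕ, (d:ℝ) * epsBit d x / 2^d + (if d = k then (1/2:ℝ)^k else 0)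
        ≤ ((k:ℝ)+1) * (epsBit d x / 2^d) + g d := by
      intro d
      have h2 : (0:ℝ) < 2^d := by positivity
      have hhalf : (1/2:ℝ)^d = 1/2^d := one_div_pow 2 d
      rcases lt_trichotomy d k with hd | hd | hd
      · rw [hmin d hd, hgdef]
        simp only [if_neg (by omega : ¬ d = k), if_neg (by omega : ¬ k < d)]
        simp
      · rw [hd, hk, hgdef]
        simp only [eq_self_iff_true, if_true, lt_self_iff_false, if_false, add_zero]
        rw [one_div_pow]
        have : ((k:ℝ)+1) * (1/2^k) = (k:ℝ) * 1 / 2^k + 1/2^k := by ring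
        linarith
      · rw [hgdef]
        simp only [if_neg (by omega : ¬ d = k), if_pos hd, add_zero]
        rcases epsBit_mem d x with hb | hb
        · rw [hb]
          have : (0:ℝ) ≤ ((d:ℝ) - k - 1) * (1/2:ℝ)^d := by
            have : (k:ℝ) + 1 ≤ d := by exact_mod_cast hd
            have h3 : (0:ℝ) ≤ (d:ℝ) - k - 1 := by linarith
            positivity
          simp only [mul_zero, zero_div, zero_mul, zero_add]
          linarith
        · rw [hb]
          have hcast : (k:ℝ) + 1 ≤ d := by exact_mod_cast hd
          have hid : (d:ℝ) * 1 / 2^d = ((k:ℝ)+1) * (1/2^d) + ((d:ℝ) - (k:ℝ) - 1) * (1/2^d) := by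
            ring
          rw [hhalf]
          linarith [hid]
    have hlhs : HasSum (fun d : ℕ => (d:ℝ) * epsBit d x / 2^d + (if d = k then (1/2:ℝ)^k else 0))
        (nu x + (1/2:ℝ)^k) := hsnu.hasSum.add hi
    have hrhs_sum : Summable (fun d : ℕ => ((k:ℝ)+1) * (epsBit d x / 2^d) + g d) :=
      ((summable_bits x).mul_left _).add hg
    have hrhs_val : ∑' d, (((k:ℝ)+1) * (epsBit d x / 2^d) + g d) = ((k:ℝ)+1) * x + (1/2:ℝ)^k := by
      rw [Summable.tsum_add ((summable_bits x).mul_left _) hg, tsum_mul_left, hbits.tsum_eq, hgsum]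
    have := Summable.tsum_le_tsum hterm hlhs.summable hrhs_sum
    rw [hlhs.tsum_eq, hrhs_val] at this
    linarith
  -- k + 1 < logb 2 (1/x) + 2
  have hklog : (k:ℝ) - 1 < Real.logb 2 (1/x) := by
    apply (Real.lt_logb_iff_rpow_lt (by norm_num) (by positivity)).mpr
    have hrw : (2:ℝ)^((k:ℝ)-1) = 2^(k:ℝ) / 2 := by
      rw [Real.rpow_sub (by norm_num), Real.rpow_one]
    rw [hrw, Real.rpow_natCast]
    rw [div_lt_div_iff₀ (by norm_num) h0]
    have hpk : (1/2:ℝ)^k * 2^k = 1 := by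
      rw [one_div_pow]; field_simp
    have h2k : (0:ℝ) < 2^k := by positivity
    nlinarith [mul_lt_mul_of_pos_right hxlt h2k]
  have hfin : ((k:ℝ)+1) * x < (Real.logb 2 (1/x) + 2) * x := by
    apply mul_lt_mul_of_pos_right _ h0
    linarith
  calc nu x ≤ ((k:ℝ)+1) * x := hnukx
  _ < (Real.logb 2 (1/x) + 2) * x := hfin
  _ = x * Real.logb 2 (1/x) + 2 * x := by ring

lemma nu_zero : nu 0 = 0 := by
  unfold nu
  convert tsum_zero with d
  unfold epsBit
  simp

theorem knuth_yao_entropy_cost (n : ℕ) (p : Fin n → ℝ)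
    (hnonneg : ∀ i, 0 ≤ p i) (hsum : ∑ i, p i = 1) :
    (∑ i, p i * Real.logb 2 (1 / p i)) ≤ ∑ i, nu (p i) ∧
    ∑ i, nu (p i) < (∑ i, p i * Real.logb 2 (1 / p i)) + 2 := by
  have hle1 : ∀ i, p i ≤ 1 := fun i =>
    hsum ▸ Finset.single_le_sum (fun j _ => hnonneg j) (Finset.mem_univ i)
  constructor
  · exact Finset.sum_le_sum fun i _ => lower_bound _ (hnonneg i) (hle1 i)
  · have hex : ∃ i, 0 < p i := by
      by_contra hc; push_neg at hc
      have : ∑ i, p i ≤ 0 := Finset.sum_nonpos fun i _ => hc i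
      rw [hsum] at this; linarith
    obtain ⟨i0, hi0⟩ := hex
    have key : ∑ i, nu (p i) < ∑ i, (p i * Real.logb 2 (1 / p i) + 2 * p i) := by
      apply Finset.sum_lt_sum
      · intro i _
        rcases eq_or_lt_of_le (hnonneg i) with h | h
        · rw [← h, nu_zero]; simp
        · exact (upper_bound_strict _ h (hle1 i)).le
      · exact ⟨i0, Finset.mem_univ i0, upper_bound_strict _ hi0 (hle1 i0)⟩
    have heq : ∑ i, (p i * Real.logb 2 (1 / p i) + 2 * p i)
        = (∑ i, p i * Real.logb 2 (1 / p i)) + 2 := by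
      rw [Finset.sum_add_distrib, ← Finset.mul_sum, hsum, mul_one]
    rw [heq] at key
    exact key
end

section
/- For every ε > 0 there exists a finite rational probability distribution P such that the Knuth–Yao optimal toll Σᵢ pᵢ·τ̃(pᵢ) < ε while for every depth K the ALDR toll exceeds 2 − ε. Concretely, for ε = 2^{-t}, take n = 2 + 2^{t+1}, m = 3·2^{t+1}, a₁ = a₂ = a₃ = 1, and a₄ = … = a_n = 3; then Σᵢ pᵢ·τ̃(pᵢ) = 3·(1/m)·τ̃(1/m) < ε where τ̃(x) = (ν(x) − x log₂(1/x))/x. -/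
open Finset


noncomputable def trel (x : ℝ) : ℝ := (nu x - x * Real.logb 2 (1 / x)) / x

/-- Shannon entropy of the distribution with three weights `1` and
`2^(t+1) - 1` weights `3`, over `m = 3·2^(t+1)`. -/
noncomputable def Hdist (t : ℕ) : ℝ :=
  let m : ℕ := 3 * 2 ^ (t + 1)
  3 * ((1 : ℝ) / m) * Real.logb 2 (m : ℝ) +
    ((2 : ℝ) ^ (t + 1) - 1) * (3 / m) * Real.logb 2 ((m : ℝ) / 3)

/-- Expected entropy cost of the depth-`K` amplified (ALDR) rejection sampler
for that distribution, with amplification factor `c = ⌊2^K/m⌋`. -/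
noncomputable def aldrCost (t K : ℕ) : ℝ :=
  let m : ℕ := 3 * 2 ^ (t + 1)
  let c : ℕ := 2 ^ K / m
  ((2 : ℝ) ^ K / ((c : ℝ) * m)) *
    (nu (((2 ^ K - c * m : ℕ) : ℝ) / 2 ^ K) +
      3 * nu ((c : ℝ) / 2 ^ K) +
      ((2 : ℝ) ^ (t + 1) - 1) * nu (((3 * c : ℕ) : ℝ) / 2 ^ K))

noncomputable def aldrToll (t K : ℕ) : ℝ := aldrCost t K - Hdist t


def Gb (k n : ℕ) : ℕ := ∑ i ∈ Finset.range k, i * 2^i * (n.testBit i).toNat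

def G (n : ℕ) : ℕ := Gb n n

lemma bits_sum : ∀ k n : ℕ, n < 2^k →
    ∑ i ∈ Finset.range k, 2^i * (n.testBit i).toNat = n := by
  intro k
  induction k with
  | zero => intro n h; interval_cases n; simp
  | succ k ih =>
    intro n h
    rw [Finset.sum_range_succ']
    have h2 : n / 2 < 2 ^ k := by
      have : n < 2^k * 2 := by rw [pow_succ] at h; omega
      omega
    have := ih (n / 2) h2
    simp only [Nat.testBit_add_one, Nat.testBit_zero]
    have e1 : ∑ i ∈ Finset.range k, 2 ^ (i+1) * ((n/2).testBit i).toNat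
        = 2 * ∑ i ∈ Finset.range k, 2 ^ i * ((n/2).testBit i).toNat := by
      rw [Finset.mul_sum]; apply Finset.sum_congr rfl; intro i _; ring
    rw [e1, this]
    rcases Nat.mod_two_eq_zero_or_one n with h0 | h0 <;> simp [h0] <;> omega

lemma Gb_stable {k k' n : ℕ} (h : n < 2^k) (hk : k ≤ k') : Gb k' n = Gb k n := by
  unfold Gb
  symm
  apply Finset.sum_subset (Finset.range_subset_range.2 hk)
  intro i _ hi
  simp only [Finset.mem_range, not_lt] at hi
  have : n < 2^i := lt_of_lt_of_le h (Nat.pow_le_pow_right (by norm_num) hi)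
  simp [Nat.testBit_lt_two_pow this]

lemma Gb_eq {k n : ℕ} (h : n < 2^k) : Gb k n = G n := by
  rcases le_total k n with hkn | hkn
  · exact (Gb_stable h hkn).symm
  · exact Gb_stable ((Nat.lt_two_pow_self (n := n))) hkn

lemma G_rec (n b : ℕ) (hb : b ≤ 1) : G (2 * n + b) = 2 * G n + 2 * n := by
  have h1 : 2 * n + b < 2 ^ (n + 2) := by
    have := (Nat.lt_two_pow_self (n := n))
    have : 2^n ≤ 2^(n+2) := Nat.pow_le_pow_right (by norm_num) (by omega)
    have h4 : 2^(n+2) = 4 * 2^n := by ring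
    have := (Nat.lt_two_pow_self (n := n))
    omega
  rw [← Gb_eq h1]
  unfold Gb
  rw [Finset.sum_range_succ']
  have hbit : ∀ i, (2 * n + b).testBit (i + 1) = n.testBit i := by
    intro i
    rw [Nat.testBit_add_one]
    congr 1
    omega
  have hbits := bits_sum (n+1) n ((Nat.lt_two_pow_self (n := n)) |>.trans_le (Nat.pow_le_pow_right (by norm_num) (by omega)))
  calc (∑ i ∈ Finset.range (n+1), (i+1) * 2^(i+1) * ((2*n+b).testBit (i+1)).toNat)
        + 0 * 2^0 * ((2*n+b).testBit 0).toNat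
      = ∑ i ∈ Finset.range (n+1), ((i+1) * 2^(i+1) * (n.testBit i).toNat) := by
        simp [hbit]
    _ = ∑ i ∈ Finset.range (n+1), (2 * (i * 2^i * (n.testBit i).toNat) + 2 * (2^i * (n.testBit i).toNat)) := by
        apply Finset.sum_congr rfl; intro i _; ring
    _ = 2 * Gb (n+1) n + 2 * n := by
        rw [Finset.sum_add_distrib, ← Finset.mul_sum, ← Finset.mul_sum, hbits]; rfl
    _ = 2 * G n + 2 * n := by
        rw [Gb_eq ((Nat.lt_two_pow_self (n := n)) |>.trans_le (Nat.pow_le_pow_right (by norm_num) (by omega)))]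

lemma G_zero : G 0 = 0 := by decide +kernel
lemma G_one : G 1 = 0 := by decide +kernel
lemma G_two : G 2 = 2 := by decide +kernel
lemma G_three : G 3 = 2 := by decide +kernel

lemma G_pow (a : ℕ) : G (2 ^ a) = a * 2 ^ a := by
  induction a with
  | zero => decide +kernel
  | succ a ih =>
    have : 2 ^ (a+1) = 2 * 2^a + 0 := by ring
    rw [this, G_rec _ _ (by norm_num), ih]; ring

lemma G_mersenne : ∀ a : ℕ, 2 ≤ a → (G (2 ^ a - 1) : ℝ) = ((a : ℝ) - 2) * 2 ^ a + 2 := by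
  intro a
  induction a with
  | zero => omega
  | succ a ih =>
    intro ha
    rcases Nat.lt_or_ge a 2 with h2 | h2
    · interval_cases a
      · omega
      · norm_num [G_three]
    · have hsplit : 2 ^ (a+1) - 1 = 2 * (2^a - 1) + 1 := by
        have : 1 ≤ 2^a := Nat.one_le_two_pow
        have : 2^(a+1) = 2 * 2^a := by ring
        omega
      rw [hsplit, G_rec _ _ le_rfl]
      have := ih h2
      push_cast [this]
      rw [Nat.cast_sub Nat.one_le_two_pow]
      push_cast
      ring

lemma G_pow_sub_two : ∀ a : ℕ, 3 ≤ a → (G (2 ^ a - 2) : ℝ) = ((a : ℝ) - 2) * 2 ^ a + 2 := by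
  intro a ha
  have hsplit : 2 ^ a - 2 = 2 * (2^(a-1) - 1) + 0 := by
    have h1 : 1 ≤ 2^(a-1) := Nat.one_le_two_pow
    have : 2^a = 2 * 2^(a-1) := by
      rw [← pow_succ']
      congr 1
      omega
    omega
  rw [hsplit, G_rec _ _ (by norm_num)]
  have h2 : 2 ≤ a - 1 := by omega
  have := G_mersenne (a-1) h2
  push_cast [this]
  rw [Nat.cast_sub Nat.one_le_two_pow]
  have hcast : ((a - 1 : ℕ) : ℝ) = (a : ℝ) - 1 := by
    rw [Nat.cast_sub (by omega)]; norm_num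
  rw [hcast]
  have hp : (2:ℝ)^a = 2 * 2^(a-1) := by
    rw [← pow_succ']
    congr 1
    omega
  rw [hp]
  push_cast
  ring

lemma pow_mod3 : ∀ e : ℕ, 2 ^ e % 3 = if e % 2 = 0 then 1 else 2 := by
  intro e
  induction e with
  | zero => simp
  | succ e ih =>
    rw [pow_succ]
    rcases Nat.mod_two_eq_zero_or_one e with h | h
    · have h1 : (e+1) % 2 = 1 := by omega
      rw [h] at ih
      rw [h1]
      norm_num at ih
      norm_num
      omega
    · have h1 : (e+1) % 2 = 0 := by omega
      rw [h] at ih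
      rw [h1]
      norm_num at ih
      norm_num
      omega

lemma G_rec' (n : ℕ) : G (2 * n) = 2 * G n + 2 * n := by
  have := G_rec n 0 (by norm_num)
  simpa using this

lemma Gc : ∀ j : ℕ, 2 ≤ j →
    9 * (G (2 ^ j / 3) : ℝ) = (3 * (j : ℝ) - 8) * 2 ^ j + 6 + 2 * ((2 ^ j % 3 : ℕ) : ℝ) := by
  intro j
  induction j using Nat.strong_induction_on with
  | _ j ih =>
    intro hj
    match j, hj with
    | 2, _ => norm_num [show (2:ℕ)^2/3 = 1 by norm_num, G_one]
    | 3, _ => norm_num [show (2:ℕ)^3/3 = 2 by norm_num, G_two]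
    | (jj+4), _ =>
      have h2 := ih (jj + 2) (by omega) (by omega)
      set j' := jj + 2 with hj'
      have hp : (2:ℕ)^(j'+2) = 4 * 2^j' := by ring
      have hdm := Nat.div_add_mod (2^j') 3
      have h3 : 2^j' % 3 < 3 := Nat.mod_lt _ (by norm_num)
      have hrec : 2^(j'+2)/3 = 4*(2^j'/3) + 2^j' % 3 := by omega
      have hmod : 2^(j'+2) % 3 = 2^j' % 3 := by
        have hpar : (j'+2) % 2 = j' % 2 := by omega
        rw [pow_mod3, pow_mod3, hpar]
      have hj4 : jj + 4 = j' + 2 := by omega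
      rw [hj4]
      set c : ℕ := 2^j'/3 with hc
      have hpr : (2:ℝ)^(j'+2) = 4 * 2^j' := by ring
      rcases Nat.mod_two_eq_zero_or_one j' with hpar | hpar
      · have hr : 2^j' % 3 = 1 := by rw [pow_mod3, if_pos hpar]
        rw [hr] at h2
        rw [hrec, hr, hmod, hr]
        have e1 : 4*c + 1 = 2*(2*c) + 1 := by ring
        rw [e1, G_rec _ 1 le_rfl, G_rec' c]
        have hcx : 3 * (c:ℝ) + 1 = 2^j' := by
          have : 3 * c + 1 = 2^j' := by omega
          exact_mod_cast this
        push_cast [hpr] at h2 ⊢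
        linear_combination 4 * h2 + 24 * hcx
      · have hr : 2^j' % 3 = 2 := by
          rw [pow_mod3]
          simp [hpar]
        rw [hr] at h2
        rw [hrec, hr, hmod, hr]
        have e1 : 4*c + 2 = 2*(2*c+1) := by ring
        rw [e1, G_rec' (2*c+1), G_rec _ 1 le_rfl]
        have hcx : 3 * (c:ℝ) + 2 = 2^j' := by
          have : 3 * c + 2 = 2^j' := by omega
          exact_mod_cast this
        push_cast [hpr] at h2 ⊢
        linear_combination 4 * h2 + 24 * hcx

lemma toNat_testBit (n i : ℕ) : (n.testBit i).toNat = n / 2^i % 2 := by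
  rw [Nat.testBit_eq_decide_div_mod_eq]
  rcases Nat.mod_two_eq_zero_or_one (n / 2^i) with h | h <;> simp [h]

lemma epsBit_dyadic_le {K d : ℕ} (n : ℕ) (hd : d ≤ K) :
    epsBit d ((n:ℝ)/2^K) = ((n.testBit (K - d)).toNat : ℝ) := by
  unfold epsBit
  have hsplit : (2:ℝ)^K = 2^(K-d) * 2^d := by
    rw [← pow_add]
    congr 1
    omega
  have harg : (2:ℝ)^d * ((n:ℝ)/2^K) = (n:ℝ) / ((2^(K-d) : ℕ) : ℝ) := by
    push_cast
    rw [hsplit]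
    field_simp
  rw [harg]
  have hfl : ⌊(n:ℝ) / ((2^(K-d) : ℕ) : ℝ)⌋ = ((n / 2^(K-d) : ℕ) : ℤ) := by
    rw [← Int.natCast_floor_eq_floor (by positivity)]
    rw [Nat.floor_div_natCast]
    simp
  rw [hfl, toNat_testBit]
  norm_cast

lemma epsBit_dyadic_gt {K d : ℕ} (n : ℕ) (hd : K < d) :
    epsBit d ((n:ℝ)/2^K) = 0 := by
  unfold epsBit
  have harg : (2:ℝ)^d * ((n:ℝ)/2^K) = ((n * 2^(d-K) : ℕ) : ℝ) := by
    have hsplit : (2:ℝ)^d = 2^(d-K) * 2^K := by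
      rw [← pow_add]
      congr 1
      omega
    push_cast
    rw [hsplit]
    field_simp
  rw [harg, Int.floor_natCast]
  have : ((n * 2^(d-K) : ℕ) : ℤ) % 2 = 0 := by
    have h1 : 1 ≤ d - K := by omega
    have : (2:ℕ) ∣ n * 2^(d-K) := Dvd.dvd.mul_left (dvd_pow_self 2 (by omega)) n
    omega
  rw [this]
  simp

lemma nu_dyadic (K n : ℕ) (h : n < 2^K) :
    nu ((n:ℝ)/2^K) = ((K:ℝ) * n - G n) / 2^K := by
  unfold nu
  rw [tsum_eq_sum (s := Finset.range (K+1)) (by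
    intro d hd
    simp only [Finset.mem_range, not_lt] at hd
    rw [epsBit_dyadic_gt n (by omega)]
    ring)]
  have step1 : ∀ d ∈ Finset.range (K+1),
      (d:ℝ) * epsBit d ((n:ℝ)/2^K) / 2^d
        = (d:ℝ) * ((n.testBit (K - d)).toNat : ℝ) / 2^d := by
    intro d hd
    simp only [Finset.mem_range] at hd
    rw [epsBit_dyadic_le n (by omega)]
  rw [Finset.sum_congr rfl step1]
  rw [← Finset.sum_range_reflect (fun d => (d:ℝ) * ((n.testBit (K - d)).toNat : ℝ) / 2^d) (K+1)]
  have step2 : ∀ i ∈ Finset.range (K+1),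
      ((K + 1 - 1 - i : ℕ):ℝ) * ((n.testBit (K - (K + 1 - 1 - i))).toNat : ℝ) / 2^(K + 1 - 1 - i)
        = (((K:ℝ) * (2^i * (n.testBit i).toNat) - (i:ℝ) * 2^i * (n.testBit i).toNat)) / 2^K := by
    intro i hi
    simp only [Finset.mem_range] at hi
    have hi' : i ≤ K := by omega
    have e1 : K + 1 - 1 - i = K - i := by omega
    have e2 : K - (K - i) = i := by omega
    rw [e1, e2]
    have e3 : ((K - i : ℕ):ℝ) = (K:ℝ) - i := by
      rw [Nat.cast_sub hi']
    have e4 : (2:ℝ)^K = 2^i * 2^(K-i) := by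
      rw [← pow_add]
      congr 1
      omega
    rw [e3, e4]
    have h2 : (2:ℝ)^(K-i) ≠ 0 := by positivity
    have h3 : (2:ℝ)^i ≠ 0 := by positivity
    field_simp
  rw [Finset.sum_congr rfl step2]
  rw [← Finset.sum_div]
  congr 1
  rw [Finset.sum_sub_distrib, ← Finset.mul_sum]
  have hb := bits_sum (K+1) n (by
    have : (2:ℕ)^K ≤ 2^(K+1) := Nat.pow_le_pow_right (by norm_num) (by omega)
    omega)
  have hg : Gb (K+1) n = G n := Gb_eq (by
    have : (2:ℕ)^K ≤ 2^(K+1) := Nat.pow_le_pow_right (by norm_num) (by omega)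
    omega)
  have hbR : ∑ i ∈ Finset.range (K+1), (2:ℝ)^i * ((n.testBit i).toNat : ℝ) = (n:ℝ) := by
    exact_mod_cast congrArg (Nat.cast : ℕ → ℝ) hb
  have hgR : ∑ i ∈ Finset.range (K+1), (i:ℝ) * 2^i * ((n.testBit i).toNat : ℝ) = (G n : ℝ) := by
    rw [← hg]
    unfold Gb
    push_cast
    rfl
  rw [hbR, hgR]

lemma floor_div_nat_real (a b : ℕ) : ⌊(a:ℝ)/(b:ℝ)⌋ = ((a / b : ℕ) : ℤ) := by
  rw [← Int.natCast_floor_eq_floor (by positivity), Nat.floor_div_natCast]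
  simp

lemma pow_div3_mod2 (e : ℕ) : (2^(e+2) / 3) % 2 = if e % 2 = 0 then 1 else 0 := by
  have h4 : (2:ℕ)^(e+2) = 4 * 2^e := by ring
  have := pow_mod3 e
  rcases Nat.mod_two_eq_zero_or_one e with h|h <;> simp [h] at this ⊢ <;> omega

lemma epsBit_small {x : ℝ} {d : ℕ} (h0 : 0 ≤ 2^d * x) (h1 : 2^d * x < 1) : epsBit d x = 0 := by
  unfold epsBit
  rw [Int.floor_eq_zero_iff.2 ⟨h0, h1⟩]
  simp

lemma epsBit_inv_big (t d : ℕ) (hd : t+1 ≤ d) :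
    epsBit d (1 / (3 * 2^(t+1))) = ((2^(d-(t+1)) / 3 % 2 : ℕ) : ℝ) := by
  unfold epsBit
  have harg : (2:ℝ)^d * (1 / (3 * 2^(t+1))) = ((2^(d-(t+1)) : ℕ):ℝ) / ((3:ℕ):ℝ) := by
    have hsplit : (2:ℝ)^d = 2^(d-(t+1)) * 2^(t+1) := by
      rw [← pow_add]
      congr 1
      omega
    push_cast
    rw [hsplit]
    have : (2:ℝ)^(t+1) ≠ 0 := by positivity
    field_simp
  rw [harg, floor_div_nat_real]
  norm_cast

lemma nu_inv (t : ℕ) : nu (1 / (3 * 2^(t+1))) = (((t:ℝ)+1)/3 + 8/9) / 2^(t+1) := by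
  have hxpos : (0:ℝ) < 3 * 2^(t+1) := by positivity
  unfold nu
  have hinj : Function.Injective (fun k : ℕ => t+3+2*k) := by intro a b hab; dsimp only at hab; omega
  rw [← Function.Injective.tsum_eq hinj (by
    intro d hd
    simp only [Function.mem_support] at hd
    by_contra hnot
    apply hd
    have hd2 : ∀ k : ℕ, t+3+2*k ≠ d := by
      intro k hk
      exact hnot ⟨k, hk⟩
    rcases Nat.lt_or_ge d (t+3) with hds | hdb
    · rcases Nat.lt_or_ge d (t+1) with h1 | h1
      · rw [epsBit_small (by positivity) (by
          rw [mul_one_div, div_lt_one hxpos]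
          have h2 : (2:ℝ)^d ≤ 2^(t+1) := pow_le_pow_right₀ (by norm_num) (by omega)
          nlinarith [pow_pos (show (0:ℝ) < 2 by norm_num) (t+1)])]
        ring
      · rw [epsBit_inv_big t d h1]
        have he : d - (t+1) ≤ 1 := by omega
        interval_cases h : (d - (t+1)) <;> norm_num
    · rw [epsBit_inv_big t d (by omega)]
      set e := d - (t+1) with he
      have he2 : 2 ≤ e := by omega
      have hodd : e % 2 = 1 := by
        by_contra hcon
        have : e % 2 = 0 := by omega
        exact hd2 ((e-2)/2) (by omega)
      have := pow_div3_mod2 (e - 2)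
      have hrw : e - 2 + 2 = e := by omega
      rw [hrw] at this
      have : 2^e / 3 % 2 = 0 := by
        rw [this, if_neg (by omega)]
      rw [this]
      norm_num)]
  have hval : ∀ k : ℕ, ((fun k : ℕ => t+3+2*k) k : ℝ) * epsBit ((fun k : ℕ => t+3+2*k) k) (1 / (3 * 2^(t+1))) / 2^((fun k : ℕ => t+3+2*k) k)
      = (((t:ℝ)+3)/2^(t+3)) * (1/4)^k + (2/2^(t+3)) * ((k:ℝ) * (1/4)^k) := by
    intro k
    simp only
    rw [epsBit_inv_big t (t+3+2*k) (by omega)]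
    have he : t+3+2*k - (t+1) = 2*k + 2 := by omega
    rw [he]
    have := pow_div3_mod2 (2*k)
    have h2k : 2*k % 2 = 0 := by omega
    rw [if_pos h2k] at this
    rw [this]
    have hpow : (2:ℝ)^(t+3+2*k) = 2^(t+3) * 4^k := by
      rw [pow_add]
      congr 1
      rw [pow_mul]
      norm_num
    rw [hpow]
    have h1 : (2:ℝ)^(t+3) ≠ 0 := by positivity
    have h2 : (4:ℝ)^k ≠ 0 := by positivity
    push_cast
    field_simp
    try ring
    rw [← mul_pow]; norm_num
  rw [tsum_congr hval]
  have hs1 : Summable (fun k : ℕ => ((1:ℝ)/4)^k) := summable_geometric_of_lt_one (by norm_num) (by norm_num)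
  have hs2 : Summable (fun k : ℕ => (k:ℝ) * (1/4)^k) := by
    have := summable_pow_mul_geometric_of_norm_lt_one (R := ℝ) 1 (r := 1/4) (by norm_num)
    simpa using this
  rw [Summable.tsum_add (hs1.mul_left _) (hs2.mul_left _), tsum_mul_left, tsum_mul_left]
  rw [tsum_geometric_of_lt_one (by norm_num) (by norm_num)]
  have hg2 : ∑' k : ℕ, (k:ℝ) * (1/4)^k = (1/4) / (1 - 1/4)^2 := by
    have := tsum_coe_mul_geometric_of_norm_lt_one (𝕜 := ℝ) (r := 1/4) (by norm_num)
    simpa using this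
  rw [hg2]
  have hpow : (2:ℝ)^(t+3) = 2^(t+1) * 4 := by
    ring
  rw [hpow]
  have h1 : (2:ℝ)^(t+1) ≠ 0 := by positivity
  field_simp
  ring

lemma logb_two_two_pow (a : ℕ) : Real.logb 2 ((2:ℝ)^a) = (a:ℝ) := by
  rw [Real.logb_pow, Real.logb_self_eq_one (by norm_num)]
  ring

lemma logb_two_m (t : ℕ) : Real.logb 2 ((3:ℝ) * 2^(t+1)) = Real.logb 2 3 + ((t:ℝ)+1) := by
  rw [Real.logb_mul (by norm_num) (by positivity), logb_two_two_pow]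
  push_cast
  ring

lemma logb3_gt_one : 1 < Real.logb 2 3 := by
  have h := Real.logb_lt_logb (b := 2) (by norm_num) (show (0:ℝ) < 2 by norm_num) (show (2:ℝ) < 3 by norm_num)
  rwa [Real.logb_self_eq_one (by norm_num)] at h

lemma logb3_lt_two : Real.logb 2 3 < 2 := by
  have h := Real.logb_lt_logb (b := 2) (by norm_num) (show (0:ℝ) < 3 by norm_num) (show (3:ℝ) < 4 by norm_num)
  have h4 : ((4:ℝ)) = 2^(2:ℕ) := by norm_num
  rw [h4, logb_two_two_pow] at h
  exact_mod_cast h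

lemma Hdist_eq (t : ℕ) : Hdist t = ((t:ℝ)+1) + Real.logb 2 3 / 2^(t+1) := by
  unfold Hdist
  dsimp only
  have hm : ((3 * 2^(t+1) : ℕ) : ℝ) = 3 * 2^(t+1) := by push_cast; ring
  rw [hm]
  have h1 : ((3:ℝ) * 2^(t+1)) / 3 = 2^(t+1) := by ring
  rw [h1, logb_two_m, logb_two_two_pow]
  have h2 : (2:ℝ)^(t+1) ≠ 0 := by positivity
  field_simp
  push_cast
  ring

set_option maxHeartbeats 2000000 in
theorem aldr_large_gap (t : ℕ) :
    3 * ((1 : ℝ) / (3 * 2 ^ (t + 1))) * trel (1 / (3 * 2 ^ (t + 1)))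
        < (2 : ℝ) ^ (-(t : ℤ)) ∧
    ∀ K : ℕ, Nat.clog 2 (3 * 2 ^ (t + 1)) ≤ K →
      2 - (2 : ℝ) ^ (-(t : ℤ)) < aldrToll t K := by
  have hT : (0:ℝ) < 2^(t+1) := by positivity
  have hzpow : (2:ℝ)^(-(t:ℤ)) = 2 / 2^(t+1) := by
    rw [zpow_neg, zpow_natCast, pow_succ]
    rw [eq_div_iff (by positivity)]
    field_simp
  constructor
  · have lhs_eq : 3 * ((1 : ℝ) / (3 * 2 ^ (t + 1))) * trel (1 / (3 * 2 ^ (t + 1)))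
        = (8/3 - Real.logb 2 3) / 2^(t+1) := by
      unfold trel
      rw [nu_inv, one_div_one_div, logb_two_m]
      field_simp
      ring
    rw [lhs_eq, hzpow, div_lt_div_iff₀ hT hT]
    nlinarith [logb3_gt_one, hT]
  · intro K hK
    have hm2 : (2:ℕ)^(t+2) < 3 * 2^(t+1) := by
      have h1 : (0:ℕ) < 2^(t+1) := pow_pos (by norm_num) _
      have h2 : (2:ℕ)^(t+2) = 2*2^(t+1) := by ring
      omega
    have htK : t + 3 ≤ K := by
      have := (Nat.lt_clog_iff_pow_lt (by norm_num)).2 hm2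
      omega
    set j := K - (t+1) with hjdef
    have hj2 : 2 ≤ j := by omega
    have hKj : K = j + (t+1) := by omega
    have hKpow : (2:ℕ)^K = 2^j * 2^(t+1) := by rw [hKj, pow_add]
    have hdm := Nat.div_add_mod (2^j) 3
    have hrlt : 2^j % 3 < 3 := Nat.mod_lt _ (by norm_num)
    have hc3 : 2^K / (3 * 2^(t+1)) = 2^j / 3 := by
      rw [hKpow]
      exact Nat.mul_div_mul_right _ _ (pow_pos (by norm_num) _)
    unfold aldrToll aldrCost
    dsimp only
    rw [hc3]
    set c : ℕ := 2^j / 3 with hcdef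
    set r : ℕ := 2^j % 3 with hrdef
    have hr12 : r = 1 ∨ (r = 2 ∧ j % 2 = 1) := by
      have := pow_mod3 j
      rcases Nat.mod_two_eq_zero_or_one j with h|h
      · left; rw [hrdef, this, if_pos h]
      · right; constructor
        · rw [hrdef, this, if_neg (by omega)]
        · exact h
    have hj4 : (4:ℕ) ≤ 2^j := by
      calc (4:ℕ) = 2^2 := by norm_num
      _ ≤ 2^j := Nat.pow_le_pow_right (by norm_num) hj2
    have hc1 : 1 ≤ c := by
      rw [hcdef]
      omega
    have hcm : c * (3 * 2^(t+1)) + r * 2^(t+1) = 2^K := by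
      rw [hKpow]
      calc c * (3*2^(t+1)) + r * 2^(t+1) = (3*c + r) * 2^(t+1) := by ring
      _ = 2^j * 2^(t+1) := by rw [hdm]
    have hTn : (1:ℕ) ≤ 2^(t+1) := Nat.one_le_two_pow
    have hjK : (2:ℕ)^j ≤ 2^K := by
      rw [hKpow]
      exact Nat.le_mul_of_pos_right _ (by omega)
    have hcmul : 3*2^(t+1) ≤ c * (3*2^(t+1)) := Nat.le_mul_of_pos_left _ hc1
    have hsub : 2^K - c * (3 * 2^(t+1)) = r * 2^(t+1) := by omega
    rw [hsub]
    have hb1 : r * 2^(t+1) < 2^K := by omega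
    have hb2 : c < 2^K := by omega
    have hb3 : 3*c < 2^K := by omega
    rw [nu_dyadic K (r * 2^(t+1)) hb1, nu_dyadic K c hb2, nu_dyadic K (3*c) hb3, Hdist_eq, hzpow]
    -- real facts
    have hXR : (4:ℝ) ≤ 2^j := by exact_mod_cast hj4
    have hrR : (r:ℝ) = 1 ∨ (r:ℝ) = 2 := by
      rcases hr12 with h|h
      · left; exact_mod_cast h
      · right; exact_mod_cast h.1
    have f1 : 3*(c:ℝ) + (r:ℝ) = 2^j := by exact_mod_cast hdm
    have hG1 : (G (r*2^(t+1)) : ℝ) = ((t:ℝ) + r) * r * 2^(t+1) := by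
      rcases hr12 with h|h
      · rw [h]
        rw [show (1:ℕ)*2^(t+1) = 2^(t+1) from one_mul _, G_pow]
        push_cast [h]
        ring
      · rw [h.1]
        rw [show (2:ℕ)*2^(t+1) = 2^(t+2) from (pow_succ' 2 (t+1)).symm, G_pow]
        push_cast [h.1]
        ring
    have hG2 : 9 * (G c : ℝ) = (3*(j:ℝ) - 8)*2^j + 6 + 2*(r:ℝ) := by
      have := Gc j hj2
      rw [← hcdef, ← hrdef] at this
      exact this
    have hG3 : (G (3*c) : ℝ) = ((j:ℝ) - 2)*2^j + 2 := by
      rcases hr12 with h|h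
      · have h3c : 3*c = 2^j - 1 := by omega
        rw [h3c]
        exact G_mersenne j hj2
      · have hj3 : 3 ≤ j := by omega
        have h3c : 3*c = 2^j - 2 := by omega
        rw [h3c]
        exact G_pow_sub_two j hj3
    have hKR : ((K:ℕ):ℝ) = (j:ℝ) + (t:ℝ) + 1 := by
      rw [hKj]
      push_cast
      ring
    have hKpR : (2:ℝ)^K = 2^j * 2^(t+1) := by
      rw [hKj, pow_add]
    have hcR : (c:ℝ) = ((2:ℝ)^j - r) / 3 := by linarith
    have hrle : (r:ℝ) ≤ 2 := by rcases hrR with h|h <;> linarith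
    have hrpos : (0:ℝ) < r := by rcases hrR with h|h <;> linarith
    have hXsub : (0:ℝ) < (2:ℝ)^j - r := by linarith
    have hCMpos : (0:ℝ) < (c:ℝ) * ((3*2^(t+1) : ℕ):ℝ) := by
      push_cast
      have : (1:ℝ) ≤ (c:ℝ) := by exact_mod_cast hc1
      positivity
    have hEq : ((2:ℝ)^K / ((c:ℝ) * ((3*2^(t+1) : ℕ):ℝ))) *
        (((K:ℝ) * ((r*2^(t+1) : ℕ):ℝ) - (G (r*2^(t+1)) : ℝ)) / 2^K +
          3 * (((K:ℝ) * (c:ℕ) - (G c : ℝ)) / 2^K) +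
          ((2:ℝ)^(t+1) - 1) * (((K:ℝ) * ((3*c : ℕ):ℝ) - (G (3*c) : ℝ)) / 2^K))
        = ((t:ℝ)+3) + (2/3) * ((2:ℝ)^j - r) / ((c:ℝ) * ((3*2^(t+1) : ℕ):ℝ)) := by
      rw [hG1, hG3]
      have hG2' : (G c : ℝ) = ((3*(j:ℝ) - 8)*2^j + 6 + 2*(r:ℝ))/9 := by linarith
      rw [hG2']
      push_cast
      rw [hKR, hKpR, hcR]
      have h2j : (0:ℝ) < (2:ℝ)^j := by positivity
      have hXRne : (2:ℝ)^j - (r:ℝ) ≠ 0 := ne_of_gt hXsub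
      rcases hrR with hR|hR <;> rw [hR] at hXRne ⊢ <;> field_simp [hXRne] <;> ring
    rw [hEq]
    have hpos2 : 0 ≤ (2/3) * ((2:ℝ)^j - r) / ((c:ℝ) * ((3*2^(t+1) : ℕ):ℝ)) := by
      apply div_nonneg _ (le_of_lt hCMpos)
      linarith
    have hlog : Real.logb 2 3 / 2^(t+1) < 2 / 2^(t+1) := by
      rw [div_lt_div_iff₀ hT hT]
      nlinarith [logb3_lt_two, hT]
    linarith [hlog, hpos2]
end
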